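/- Let U ⊆ V ⊆ X be open subsets with closure(U) compact, in a locally compact space X. A sheaf F of vector spaces over a field is 'quasi-injective' if for any such pair the restriction Γ(V; F) → Γ(U; F) is surjective. Then: if 0 → F' → F → F'' → 0 is exact with F' quasi-injective, F is quasi-injective if and only if F'' is quasi-injective, and Γ(V;F) → Γ(V;F'') is surjective for every open V. -/

import Mathlib

open CategoryTheory TopologicalSpace Opposite

/-- A sheaf `F` of `ℂ`-vector spaces on a locally compact space is quasi-injective if for
every pair of opens `U ⊆ V` with `closure U` compact, the restriction
`Γ(V; F) → Γ(U; F)` is surjective. -/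
def QuasiInjectiveSheaf (X : TopCat) (F : TopCat.Sheaf (ModuleCat ℂ) X) : Prop :=
  ∀ U V : Opens X, ∀ h : U ≤ V, IsCompact (closure (U : Set X)) →
    Function.Surjective (F.1.map (homOfLE h).op)

namespace QIAux

open TopCat TopCat.Presheaf

variable {X : TopCat.{0}} {F' F F'' : TopCat.Sheaf (ModuleCat.{0} ℂ) X}

lemma res_congr (G : TopCat.Sheaf (ModuleCat.{0} ℂ) X) {U V : Opens X} (f g : U ⟶ V)
    (s : G.1.obj (op V)) : G.1.map f.op s = G.1.map g.op s := by
  rw [Subsingleton.elim f g]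

lemma res_res (G : TopCat.Sheaf (ModuleCat.{0} ℂ) X) {U V W : Opens X} (f : U ⟶ V) (g : V ⟶ W)
    (s : G.1.obj (op W)) : G.1.map f.op (G.1.map g.op s) = G.1.map (f ≫ g).op s := by
  rw [op_comp, G.1.map_comp, ConcreteCategory.comp_apply]

lemma res_id (G : TopCat.Sheaf (ModuleCat.{0} ℂ) X) {U : Opens X} (h : U ≤ U)
    (s : G.1.obj (op U)) : G.1.map (homOfLE h).op s = s := by
  rw [show homOfLE h = 𝟙 U from Subsingleton.elim _ _, op_id, G.1.map_id]
  rfl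

lemma nat_apply {G H : TopCat.Sheaf (ModuleCat.{0} ℂ) X} (η : G ⟶ H) {U V : Opens X} (i : U ⟶ V)
    (s : G.1.obj (op V)) :
    η.1.app (op U) (G.1.map i.op s) = H.1.map i.op (η.1.app (op V) s) := by
  exact ConcreteCategory.congr_hom (η.1.naturality i.op) s

lemma bot_eq_zero (G : TopCat.Sheaf (ModuleCat.{0} ℂ) X) (s : G.1.obj (op ⊥)) : s = 0 := by
  exact TopCat.Presheaf.section_ext (C := ModuleCat ℂ) G ⊥ s 0 (fun x hx => (hx : False).elim)

lemma phi_app_inj (φ : F' ⟶ F)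
    (hinj : ∀ x : X, Function.Injective ((stalkFunctor (ModuleCat ℂ) x).map φ.1))
    (U : Opens X) : Function.Injective (φ.1.app (op U)) :=
  TopCat.Presheaf.app_injective_of_stalkFunctor_map_injective φ.1 U fun x _ => hinj x

lemma germ_nat_apply {G H : TopCat.Sheaf (ModuleCat.{0} ℂ) X} (η : G ⟶ H) (U : Opens X)
    (x : X) (hx : x ∈ U) (s : G.1.obj (op U)) :
    H.presheaf.germ U x hx (η.1.app (op U) s)
      = ((stalkFunctor (ModuleCat ℂ) x).map η.1) (G.presheaf.germ U x hx s) :=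
  (ConcreteCategory.congr_hom (TopCat.Presheaf.stalkFunctor_map_germ U x hx η.1) s).symm

lemma comp_zero_app (φ : F' ⟶ F) (ψ : F ⟶ F'')
    (hexact : ∀ x : X, Function.Exact
      ((stalkFunctor (ModuleCat ℂ) x).map φ.1) ((stalkFunctor (ModuleCat ℂ) x).map ψ.1))
    (U : Opens X) (σ : F'.1.obj (op U)) :
    ψ.1.app (op U) (φ.1.app (op U) σ) = 0 := by
  apply TopCat.Presheaf.section_ext (C := ModuleCat ℂ) F'' U
  intro x hx
  show F''.presheaf.germ U x hx (ψ.1.app (op U) (φ.1.app (op U) σ))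
      = F''.presheaf.germ U x hx 0
  rw [map_zero, germ_nat_apply ψ, germ_nat_apply φ]
  exact (hexact x).apply_apply_eq_zero _

lemma sec_exact (φ : F' ⟶ F) (ψ : F ⟶ F'')
    (hinj : ∀ x : X, Function.Injective ((stalkFunctor (ModuleCat ℂ) x).map φ.1))
    (hexact : ∀ x : X, Function.Exact
      ((stalkFunctor (ModuleCat ℂ) x).map φ.1) ((stalkFunctor (ModuleCat ℂ) x).map ψ.1))
    (U : Opens X) (s : F.1.obj (op U)) (hs : ψ.1.app (op U) s = 0) :
    ∃ σ : F'.1.obj (op U), φ.1.app (op U) σ = s := by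
  have loc : ∀ x : U, ∃ (W : Opens X) (_ : x.1 ∈ W) (iWU : W ⟶ U) (σ : F'.1.obj (op W)),
      φ.1.app (op W) σ = F.1.map iWU.op s := by
    rintro ⟨x, hx⟩
    have h1 : ((stalkFunctor (ModuleCat ℂ) x).map ψ.1) (F.presheaf.germ U x hx s) = 0 := by
      rw [← germ_nat_apply ψ U x hx s, hs, map_zero]; rfl
    obtain ⟨e, he⟩ := (hexact x _).mp h1
    obtain ⟨W₀, hxW₀, σ₀, rfl⟩ := TopCat.Presheaf.germ_exist F'.1 e
    have he' : F.presheaf.germ W₀ x hxW₀ (φ.1.app (op W₀) σ₀) = F.presheaf.germ U x hx s := by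
      rw [germ_nat_apply φ W₀ x hxW₀ σ₀]; exact he
    obtain ⟨W, hxW, iWW₀, iWU, heq⟩ := F.presheaf.germ_eq x hxW₀ hx _ _ he'
    have heq' : F.1.map iWW₀.op (φ.1.app (op W₀) σ₀) = F.1.map iWU.op s := heq
    refine ⟨W, hxW, iWU, F'.1.map iWW₀.op σ₀, ?_⟩
    rw [nat_apply φ iWW₀ σ₀]
    exact heq'
  choose W hxW iWU σ hσ using loc
  have hcover : U ≤ iSup W := fun x hx => Opens.mem_iSup.mpr ⟨⟨x, hx⟩, hxW _⟩
  have hcomp : TopCat.Presheaf.IsCompatible F'.1 W σ := by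
    intro i j
    apply phi_app_inj φ hinj
    show φ.1.app _ (F'.1.map (Opens.infLELeft (W i) (W j)).op (σ i))
        = φ.1.app _ (F'.1.map (Opens.infLERight (W i) (W j)).op (σ j))
    rw [nat_apply φ (Opens.infLELeft (W i) (W j)) (σ i),
      nat_apply φ (Opens.infLERight (W i) (W j)) (σ j), hσ, hσ, res_res, res_res]
    exact res_congr F _ _ s
  obtain ⟨σU, hσU, -⟩ := TopCat.Sheaf.existsUnique_gluing' F' W U iWU hcover σ hcomp
  refine ⟨σU, ?_⟩
  apply TopCat.Sheaf.eq_of_locally_eq' F W U iWU hcover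
  intro i
  show F.1.map (iWU i).op (φ.1.app (op U) σU) = F.1.map (iWU i).op s
  have h2 : F'.1.map (iWU i).op σU = σ i := hσU i
  rw [← nat_apply φ (iWU i) σU, h2, hσ]

lemma loc_lift (ψ : F ⟶ F'')
    (hsurj : ∀ x : X, Function.Surjective ((stalkFunctor (ModuleCat ℂ) x).map ψ.1))
    (V : Opens X) (t'' : F''.1.obj (op V)) (x : X) (hx : x ∈ V) :
    ∃ (W : Opens X) (_ : x ∈ W) (hWV : W ≤ V) (t : F.1.obj (op W)),
      ψ.1.app (op W) t = F''.1.map (homOfLE hWV).op t'' := by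
  obtain ⟨e, he⟩ := hsurj x (F''.presheaf.germ V x hx t'')
  obtain ⟨W₁, hxW₁, t₁, rfl⟩ := TopCat.Presheaf.germ_exist F.1 e
  have he' : F''.presheaf.germ W₁ x hxW₁ (ψ.1.app (op W₁) t₁)
      = F''.presheaf.germ V x hx t'' := by
    rw [germ_nat_apply ψ W₁ x hxW₁ t₁]; exact he
  obtain ⟨W₂, hxW₂, i₁, i₂, heq⟩ := F''.presheaf.germ_eq x hxW₁ hx _ _ he'
  have heq' : F''.1.map i₁.op (ψ.1.app (op W₁) t₁) = F''.1.map i₂.op t'' := heq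
  refine ⟨W₂, hxW₂, i₂.le, F.1.map i₁.op t₁, ?_⟩
  rw [nat_apply ψ i₁ t₁, heq']
  exact res_congr F'' _ _ t''

lemma glue_two (G : TopCat.Sheaf (ModuleCat.{0} ℂ) X) {U₁ U₂ : Opens X}
    (s₁ : G.1.obj (op U₁)) (s₂ : G.1.obj (op U₂))
    (h : G.1.map (Opens.infLELeft U₁ U₂).op s₁ = G.1.map (Opens.infLERight U₁ U₂).op s₂) :
    ∃ s : G.1.obj (op (U₁ ⊔ U₂)),
      G.1.map (homOfLE le_sup_left).op s = s₁ ∧ G.1.map (homOfLE le_sup_right).op s = s₂ := by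
  let Uf : Bool → Opens X := fun b => Bool.rec U₂ U₁ b
  let sf : ∀ b, G.1.obj (op (Uf b)) :=
    fun b => Bool.rec (motive := fun t => G.1.obj (op (Uf t))) s₂ s₁ b
  have hcomp : TopCat.Presheaf.IsCompatible G.1 Uf sf := by
    intro i j
    show G.1.map (Opens.infLELeft (Uf i) (Uf j)).op (sf i)
        = G.1.map (Opens.infLERight (Uf i) (Uf j)).op (sf j)
    cases i <;> cases j
    · exact res_congr G _ _ s₂
    · have k : U₂ ⊓ U₁ ⟶ U₁ ⊓ U₂ := homOfLE (le_inf inf_le_right inf_le_left)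
      have h' := congrArg (G.1.map k.op) h
      rw [res_res, res_res] at h'
      calc G.1.map (Opens.infLELeft U₂ U₁).op s₂
          = G.1.map (k ≫ Opens.infLERight U₁ U₂).op s₂ := res_congr G _ _ s₂
        _ = G.1.map (k ≫ Opens.infLELeft U₁ U₂).op s₁ := h'.symm
        _ = G.1.map (Opens.infLERight U₂ U₁).op s₁ := res_congr G _ _ s₁
    · exact h
    · exact res_congr G _ _ s₁
  have hcover : U₁ ⊔ U₂ ≤ iSup Uf := by
    apply sup_le
    · exact le_iSup Uf true
    · exact le_iSup Uf false
  have hle : ∀ b, Uf b ≤ U₁ ⊔ U₂ := by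
    intro b; cases b
    · exact le_sup_right
    · exact le_sup_left
  obtain ⟨s, hspec, -⟩ := TopCat.Sheaf.existsUnique_gluing' G Uf (U₁ ⊔ U₂)
    (fun b => homOfLE (hle b)) hcover sf hcomp
  have h1 : G.1.map (homOfLE (hle true)).op s = s₁ := hspec true
  have h2 : G.1.map (homOfLE (hle false)).op s = s₂ := hspec false
  exact ⟨s, (res_congr G _ _ s).trans h1, (res_congr G _ _ s).trans h2⟩

lemma exists_rc [LocallyCompactSpace X] [T2Space X] {W : Opens X} {x : X} (hx : x ∈ W) :
    ∃ W' : Opens X, x ∈ W' ∧ closure (W' : Set X) ⊆ (W : Set X) ∧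
      IsCompact (closure (W' : Set X)) := by
  obtain ⟨K, hK, hxK, hKW⟩ := exists_compact_subset W.2 hx
  have hcl : closure (interior K) ⊆ K := closure_minimal interior_subset hK.isClosed
  exact ⟨⟨interior K, isOpen_interior⟩, hxK, hcl.trans hKW,
    hK.of_isClosed_subset isClosed_closure hcl⟩

lemma app_surj [LocallyCompactSpace X] [T2Space X]
    (φ : F' ⟶ F) (ψ : F ⟶ F'')
    (hinj : ∀ x : X, Function.Injective ((stalkFunctor (ModuleCat ℂ) x).map φ.1))
    (hexact : ∀ x : X, Function.Exact
      ((stalkFunctor (ModuleCat ℂ) x).map φ.1) ((stalkFunctor (ModuleCat ℂ) x).map ψ.1))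
    (hsurj : ∀ x : X, Function.Surjective ((stalkFunctor (ModuleCat ℂ) x).map ψ.1))
    (hqinj : QuasiInjectiveSheaf X F')
    (V : Opens X) : Function.Surjective (ψ.1.app (op V)) := by
  intro t''
  let α := {p : Σ U : Opens X, F.1.obj (op U) //
    ∃ h : p.1 ≤ V, ψ.1.app (op p.1) p.2 = F''.1.map (homOfLE h).op t''}
  let r : α → α → Prop := fun p q => ∃ h : p.1.1 ≤ q.1.1, F.1.map (homOfLE h).op q.1.2 = p.1.2
  have hrefl : ∀ a : α, r a a := fun a => ⟨le_refl _, res_id F _ _⟩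
  have htrans : ∀ {a b c : α}, r a b → r b c → r a c := by
    rintro a b c ⟨h1, e1⟩ ⟨h2, e2⟩
    refine ⟨h1.trans h2, ?_⟩
    rw [← e1, ← e2, res_res]
    exact res_congr F _ _ _
  have hbound : ∀ c : Set α, IsChain r c → ∃ ub, ∀ a ∈ c, r a ub := by
    intro c hchain
    by_cases hc : c.Nonempty
    · let Uf : c → Opens X := fun i => i.1.1.1
      let sf : ∀ i : c, F.1.obj (op (Uf i)) := fun i => i.1.1.2
      have htot : ∀ i j : c, r i.1 j.1 ∨ r j.1 i.1 := by
        intro i j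
        rcases eq_or_ne i.1 j.1 with h | h
        · exact Or.inl (h ▸ hrefl i.1)
        · exact hchain i.2 j.2 h
      have hcomp : TopCat.Presheaf.IsCompatible F.1 Uf sf := by
        intro i j
        show F.1.map (Opens.infLELeft (Uf i) (Uf j)).op (sf i)
            = F.1.map (Opens.infLERight (Uf i) (Uf j)).op (sf j)
        rcases htot i j with ⟨hle, heq⟩ | ⟨hle, heq⟩
        · have heq' : F.1.map (homOfLE hle).op (sf j) = sf i := heq
          rw [← heq', res_res]; exact res_congr F _ _ _
        · have heq' : F.1.map (homOfLE hle).op (sf i) = sf j := heq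
          rw [← heq', res_res]; exact res_congr F _ _ _
      obtain ⟨sW, hsW, -⟩ := TopCat.Sheaf.existsUnique_gluing F Uf sf hcomp
      have hsupV : iSup Uf ≤ V := iSup_le fun i => i.1.2.choose
      have hψW : ψ.1.app (op (iSup Uf)) sW = F''.1.map (homOfLE hsupV).op t'' := by
        apply TopCat.Sheaf.eq_of_locally_eq' F'' Uf (iSup Uf) (fun i => Opens.leSupr Uf i) le_rfl
        intro i
        show F''.1.map (Opens.leSupr Uf i).op (ψ.1.app (op (iSup Uf)) sW)
            = F''.1.map (Opens.leSupr Uf i).op (F''.1.map (homOfLE hsupV).op t'')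
        have hres : F.1.map (Opens.leSupr Uf i).op sW = sf i := hsW i
        rw [← nat_apply ψ (Opens.leSupr Uf i) sW, hres, i.1.2.choose_spec, res_res]
        exact res_congr F'' _ _ t''
      refine ⟨⟨⟨iSup Uf, sW⟩, hsupV, hψW⟩, fun a ha => ⟨le_iSup Uf ⟨a, ha⟩, ?_⟩⟩
      have h2 : F.1.map (Opens.leSupr Uf ⟨a, ha⟩).op sW = a.1.2 := hsW ⟨a, ha⟩
      exact (res_congr F _ _ sW).trans h2
    · refine ⟨⟨⟨⊥, 0⟩, bot_le, ?_⟩, fun a ha => absurd ⟨a, ha⟩ hc⟩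
      rw [map_zero]
      exact (bot_eq_zero F'' _).symm
  obtain ⟨m, hmax⟩ := exists_maximal_of_chains_bounded hbound (fun {a b c} => htrans)
  obtain ⟨⟨U₀, s₀⟩, hcond⟩ := m
  have hU₀ : ∀ y, y ∈ V → y ∈ U₀ := by
    by_contra hy
    push_neg at hy
    obtain ⟨x, hxV, hxU₀⟩ := hy
    obtain ⟨W, hxW, hWV, t, ht⟩ := loc_lift ψ hsurj V t'' x hxV
    obtain ⟨W', hxW', hW'cl, hW'cpt⟩ := exists_rc hxW
    have hW'W : W' ≤ W := fun y hy => hW'cl (subset_closure hy)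
    have hZU : U₀ ⊓ W ≤ U₀ := inf_le_left
    have hZW : U₀ ⊓ W ≤ W := inf_le_right
    set d : F.1.obj (op (U₀ ⊓ W)) :=
      F.1.map (homOfLE hZU).op s₀ - F.1.map (homOfLE hZW).op t with hd
    have hψd : ψ.1.app (op (U₀ ⊓ W)) d = 0 := by
      rw [hd, map_sub, nat_apply ψ (homOfLE hZU) s₀, nat_apply ψ (homOfLE hZW) t,
        hcond.choose_spec, ht, res_res, res_res, sub_eq_zero]
      exact res_congr F'' _ _ t''
    obtain ⟨σ, hσ⟩ := sec_exact φ ψ hinj hexact (U₀ ⊓ W) d hψd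
    have hZ'Z : U₀ ⊓ W' ≤ U₀ ⊓ W := inf_le_inf_left U₀ hW'W
    have hZ'W : U₀ ⊓ W' ≤ W := hZ'Z.trans hZW
    have hcpt : IsCompact (closure ((U₀ ⊓ W' : Opens X) : Set X)) := by
      apply hW'cpt.of_isClosed_subset isClosed_closure
      exact closure_mono (by rw [Opens.coe_inf]; exact Set.inter_subset_right)
    obtain ⟨τ, hτ⟩ := hqinj (U₀ ⊓ W') W hZ'W hcpt (F'.1.map (homOfLE hZ'Z).op σ)
    set t₂ : F.1.obj (op W) := t + φ.1.app (op W) τ with ht₂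
    have hψt₂ : ψ.1.app (op W) t₂ = F''.1.map (homOfLE hWV).op t'' := by
      rw [ht₂, map_add, ht, comp_zero_app φ ψ hexact W τ, add_zero]
    have hagree : F.1.map (homOfLE (inf_le_left : U₀ ⊓ W' ≤ U₀)).op s₀
        = F.1.map (homOfLE hZ'W).op t₂ := by
      rw [ht₂, map_add, ← nat_apply φ (homOfLE hZ'W) τ, hτ, nat_apply φ (homOfLE hZ'Z) σ, hσ,
        hd, map_sub, res_res, res_res,
        res_congr F (homOfLE hZ'W) (homOfLE hZ'Z ≫ homOfLE hZW) t,
        res_congr F (homOfLE (inf_le_left : U₀ ⊓ W' ≤ U₀)) (homOfLE hZ'Z ≫ homOfLE hZU) s₀]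
      abel
    have hkey : F.1.map (Opens.infLELeft U₀ W').op s₀
        = F.1.map (Opens.infLERight U₀ W').op (F.1.map (homOfLE hW'W).op t₂) := by
      rw [res_res]
      calc F.1.map (Opens.infLELeft U₀ W').op s₀
          = F.1.map (homOfLE (inf_le_left : U₀ ⊓ W' ≤ U₀)).op s₀ := res_congr F _ _ s₀
        _ = F.1.map (homOfLE hZ'W).op t₂ := hagree
        _ = F.1.map (Opens.infLERight U₀ W' ≫ homOfLE hW'W).op t₂ := res_congr F _ _ t₂
    obtain ⟨sN, hN1, hN2⟩ := glue_two F s₀ (F.1.map (homOfLE hW'W).op t₂) hkey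
    have hsupV : U₀ ⊔ W' ≤ V := sup_le hcond.choose (hW'W.trans hWV)
    have hψN : ψ.1.app (op (U₀ ⊔ W')) sN = F''.1.map (homOfLE hsupV).op t'' := by
      apply TopCat.Sheaf.eq_of_locally_eq₂ F'' (homOfLE (le_sup_left : U₀ ≤ U₀ ⊔ W'))
        (homOfLE (le_sup_right : W' ≤ U₀ ⊔ W')) le_rfl
      · show F''.1.map (homOfLE le_sup_left).op (ψ.1.app (op (U₀ ⊔ W')) sN)
            = F''.1.map (homOfLE le_sup_left).op (F''.1.map (homOfLE hsupV).op t'')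
        rw [← nat_apply ψ (homOfLE le_sup_left) sN, hN1, hcond.choose_spec, res_res]
        exact res_congr F'' _ _ t''
      · show F''.1.map (homOfLE le_sup_right).op (ψ.1.app (op (U₀ ⊔ W')) sN)
            = F''.1.map (homOfLE le_sup_right).op (F''.1.map (homOfLE hsupV).op t'')
        rw [← nat_apply ψ (homOfLE le_sup_right) sN, hN2, nat_apply ψ (homOfLE hW'W) t₂,
          hψt₂, res_res, res_res]
        exact res_congr F'' _ _ t''
    have hra : r ⟨⟨U₀, s₀⟩, hcond⟩ ⟨⟨U₀ ⊔ W', sN⟩, hsupV, hψN⟩ := ⟨le_sup_left, hN1⟩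
    obtain ⟨hback, -⟩ := hmax _ hra
    exact hxU₀ (hback ((SetLike.le_def.mp (le_sup_right : W' ≤ U₀ ⊔ W')) hxW'))
  have hUV : U₀ = V := le_antisymm hcond.choose (SetLike.le_def.mpr hU₀)
  subst hUV
  refine ⟨s₀, ?_⟩
  rw [hcond.choose_spec]
  exact res_id F'' _ t''

end QIAux

/-- Let `0 → F' → F → F'' → 0` be a short exact sequence (exactness expressed on stalks)
of sheaves of `ℂ`-vector spaces on a locally compact space, with `F'` quasi-injective.
Then `F` is quasi-injective if and only if `F''` is, and `Γ(V; F) → Γ(V; F'')` is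
surjective for every open `V`. -/
theorem stmt15 (X : TopCat) [LocallyCompactSpace X] [T2Space X]
    (F' F F'' : TopCat.Sheaf (ModuleCat ℂ) X)
    (φ : F' ⟶ F) (ψ : F ⟶ F'')
    (hinj : ∀ x : X, Function.Injective
      ((TopCat.Presheaf.stalkFunctor (ModuleCat ℂ) x).map φ.1))
    (hexact : ∀ x : X, Function.Exact
      ((TopCat.Presheaf.stalkFunctor (ModuleCat ℂ) x).map φ.1)
      ((TopCat.Presheaf.stalkFunctor (ModuleCat ℂ) x).map ψ.1))
    (hsurj : ∀ x : X, Function.Surjective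
      ((TopCat.Presheaf.stalkFunctor (ModuleCat ℂ) x).map ψ.1))
    (hqinj : QuasiInjectiveSheaf X F') :
    (QuasiInjectiveSheaf X F ↔ QuasiInjectiveSheaf X F'') ∧
    ∀ V : Opens X, Function.Surjective (ψ.1.app (op V)) := by
  have hsurjV : ∀ V : Opens X, Function.Surjective (ψ.1.app (op V)) :=
    QIAux.app_surj φ ψ hinj hexact hsurj hqinj
  refine ⟨⟨?_, ?_⟩, hsurjV⟩
  · intro hF U V h hcpt s''
    obtain ⟨s, hs⟩ := hsurjV U s''
    obtain ⟨sV, hsV⟩ := hF U V h hcpt s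
    refine ⟨ψ.1.app (op V) sV, ?_⟩
    rw [← QIAux.nat_apply ψ (homOfLE h) sV, hsV]
    exact hs
  · intro hF'' U V h hcpt s
    obtain ⟨w, hw⟩ := hF'' U V h hcpt (ψ.1.app (op U) s)
    obtain ⟨tV, htV⟩ := hsurjV V w
    have hd : ψ.1.app (op U) (s - F.1.map (homOfLE h).op tV) = 0 := by
      rw [map_sub, QIAux.nat_apply ψ (homOfLE h) tV, htV, hw, sub_self]
    obtain ⟨σ, hσ⟩ := QIAux.sec_exact φ ψ hinj hexact U _ hd
    obtain ⟨τ, hτ⟩ := hqinj U V h hcpt σ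
    refine ⟨tV + φ.1.app (op V) τ, ?_⟩
    rw [map_add, ← QIAux.nat_apply φ (homOfLE h) τ, hτ, hσ]
    abel
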